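/- Let β > 0 and set A = Γ(β)/Γ(β+1/10). Define s(x) = 2·ln(1+√2) − (20√2/(9A))·x^(9/10) and y(x) = ((1+√2) − (√2−1)·e^{s(x)}) / (1 + e^{s(x)}) for x ≥ 0. Then y(0) = 0 and, for every x > 0, y solves the Riccati fractional differential equation in the GFD sense of order α = 9/10: A·x^(1/10)·y′(x) = 2·y(x) − y(x)^2 + 1. -/

import Mathlib

open Real

/-- With `A = Γ(β)/Γ(β+1/10)`, `s(x) = 2·ln(1+√2) − (20√2/(9A))·x^(9/10)` and
`y(x) = ((1+√2) − (√2−1)·e^{s(x)})/(1 + e^{s(x)})`, one has `y 0 = 0` and `y` solves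
the Riccati fractional differential equation in the GFD sense of order `9/10`:
`A·x^(1/10)·y′(x) = 2·y(x) − y(x)² + 1` for all `x > 0`. -/
theorem gfd_riccati_nonhomogeneous (β : ℝ) (hβ : 0 < β) (A : ℝ)
    (hA : A = Real.Gamma β / Real.Gamma (β + 1 / 10)) (s y : ℝ → ℝ)
    (hs : ∀ x : ℝ, s x =
      2 * Real.log (1 + Real.sqrt 2) - 20 * Real.sqrt 2 / (9 * A) * x ^ ((9 : ℝ) / 10))
    (hy : ∀ x : ℝ, y x =
      ((1 + Real.sqrt 2) - (Real.sqrt 2 - 1) * Real.exp (s x)) / (1 + Real.exp (s x))) :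
    y 0 = 0 ∧
    ∀ x : ℝ, 0 < x → A * x ^ ((1 : ℝ) / 10) * deriv y x = 2 * y x - (y x) ^ 2 + 1 := by
  have hsq2 : Real.sqrt 2 ^ 2 = 2 := Real.sq_sqrt (by norm_num)
  have hsq2pos : (0:ℝ) < Real.sqrt 2 := Real.sqrt_pos.mpr (by norm_num)
  have hApos : 0 < A := by
    rw [hA]
    exact div_pos (Real.Gamma_pos_of_pos hβ) (Real.Gamma_pos_of_pos (by linarith))
  constructor
  · have hs0 : s 0 = 2 * Real.log (1 + Real.sqrt 2) := by
      rw [hs 0, Real.zero_rpow (by norm_num)]; ring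
    have hexp : Real.exp (s 0) = (1 + Real.sqrt 2) ^ 2 := by
      rw [hs0, mul_comm, Real.exp_mul, Real.exp_log (by positivity), Real.rpow_two]
    rw [hy 0, hexp]
    rw [div_eq_zero_iff]
    left; nlinarith [hsq2]
  · intro x hx
    set E := Real.exp (s x) with hE
    have hEpos : 0 < E := Real.exp_pos _
    have h1E : (1:ℝ) + E ≠ 0 := by positivity
    -- derivative of s
    have hsfun : s = fun t : ℝ => 2 * Real.log (1 + Real.sqrt 2)
        - 20 * Real.sqrt 2 / (9 * A) * t ^ ((9 : ℝ) / 10) := funext hs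
    have hds : HasDerivAt s
        (-(20 * Real.sqrt 2 / (9 * A) * ((9:ℝ)/10 * x ^ ((9:ℝ)/10 - 1)))) x := by
      rw [hsfun]
      have h1 : HasDerivAt (fun t : ℝ => t ^ ((9:ℝ)/10)) ((9:ℝ)/10 * x ^ ((9:ℝ)/10 - 1)) x :=
        Real.hasDerivAt_rpow_const (Or.inl hx.ne')
      have h2 := (h1.const_mul (20 * Real.sqrt 2 / (9 * A)))
      have := (hasDerivAt_const x (2 * Real.log (1 + Real.sqrt 2))).sub h2
      rw [zero_sub] at this; exact this
    have hdE : HasDerivAt (fun t : ℝ => Real.exp (s t))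
        (Real.exp (s x) * (-(20 * Real.sqrt 2 / (9 * A) * ((9:ℝ)/10 * x ^ ((9:ℝ)/10 - 1))))) x :=
      hds.exp
    set s' : ℝ := -(20 * Real.sqrt 2 / (9 * A) * ((9:ℝ)/10 * x ^ ((9:ℝ)/10 - 1))) with hs'
    have hyfun : y = fun t : ℝ =>
        ((1 + Real.sqrt 2) - (Real.sqrt 2 - 1) * Real.exp (s t)) / (1 + Real.exp (s t)) :=
      funext hy
    have hnum : HasDerivAt (fun t : ℝ => (1 + Real.sqrt 2) - (Real.sqrt 2 - 1) * Real.exp (s t))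
        (0 - (Real.sqrt 2 - 1) * (Real.exp (s x) * s')) x :=
      (hasDerivAt_const x _).sub (hdE.const_mul _)
    have hden : HasDerivAt (fun t : ℝ => 1 + Real.exp (s t))
        (0 + Real.exp (s x) * s') x :=
      (hasDerivAt_const x (1:ℝ)).add hdE
    have hdy : HasDerivAt y
        (((0 - (Real.sqrt 2 - 1) * (Real.exp (s x) * s')) * (1 + Real.exp (s x))
          - ((1 + Real.sqrt 2) - (Real.sqrt 2 - 1) * Real.exp (s x)) * (0 + Real.exp (s x) * s'))
          / (1 + Real.exp (s x)) ^ 2) x := by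
      rw [hyfun]
      exact hnum.div hden h1E
    have hderiv := hdy.deriv
    rw [hy x, hderiv]
    have hxx : x ^ ((1:ℝ)/10) * x ^ ((9:ℝ)/10 - 1) = 1 := by
      rw [← Real.rpow_add hx]; norm_num
    set u : ℝ := x ^ ((1:ℝ)/10) with hu
    have hupos : 0 < u := Real.rpow_pos_of_pos hx _
    have ht : x ^ ((9:ℝ)/10 - 1) = u⁻¹ := eq_inv_of_mul_eq_one_right hxx
    rw [hs', ht]
    set r : ℝ := Real.sqrt 2 with hr
    have h2sq : (1+E)^2 ≠ 0 := pow_ne_zero _ h1E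
    field_simp
    linear_combination (10 * (1 + Real.exp (s x))^2) * hsq2
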